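/- Let N ≥ 1 be an integer, C ≥ 0, M ≥ 0, and let (a_μ)_{μ ∈ ℕ^N} be a family of real numbers indexed by multi-indices such that |a_μ| ≤ C·M^{|μ|} for every μ. Then Σ_{μ ∈ ℕ^N} a_μ²/μ! ≤ C²·Σ_{s=0}^∞ (N+s)^N·M^{2s}/(⌊s/N⌋)!, and in particular the left-hand sum is finite. -/

import Mathlib

lemma aux_summable_pi_prod (v : ℕ → ℝ) (hv : Summable v) (hv0 : ∀ k, 0 ≤ v k) :
    ∀ n : ℕ, Summable (fun μ : Fin n → ℕ => ∏ i, v (μ i)) := by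
  intro n
  induction n with
  | zero =>
    have h : (fun μ : Fin 0 → ℕ => ∏ i, v (μ i)) = fun _ => 1 := by
      funext μ; simp
    rw [h]
    haveI : Subsingleton (Fin 0 → ℕ) := ⟨fun f g => funext fun i => i.elim0⟩
    haveI : Finite (Fin 0 → ℕ) := Finite.of_subsingleton
    exact .of_finite
  | succ n ih =>
    have h : Summable (fun p : ℕ × (Fin n → ℕ) => v p.1 * ∏ i, v (p.2 i)) :=
      Summable.mul_of_nonneg (f := v) (g := fun μ : Fin n → ℕ => ∏ i, v (μ i))
        hv ih hv0 (fun μ => Finset.prod_nonneg fun i _ => hv0 _)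
    refine (Equiv.summable_iff (Fin.consEquiv (fun _ : Fin (n+1) => ℕ))).mp ?_
    convert h using 1
    funext p
    simp [Fin.prod_univ_succ]

lemma aux_summable_div (N : ℕ) (hN : 1 ≤ N) (D : ℝ) (hD : 0 ≤ D) :
    Summable (fun s : ℕ => D ^ (s / N) / ((s / N).factorial : ℝ)) := by
  haveI : NeZero N := ⟨by omega⟩
  have h0 : ∀ q : ℕ, 0 ≤ D ^ q / (q.factorial : ℝ) := fun q => by positivity
  have hfin : Summable (fun _ : Fin N => (1:ℝ)) := .of_finite
  have h : Summable (fun p : ℕ × Fin N => (D ^ p.1 / (p.1.factorial : ℝ)) * 1) :=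
    (Real.summable_pow_div_factorial D).mul_of_nonneg hfin h0 (fun _ => zero_le_one)
  have h' : Summable (fun p : ℕ × Fin N => D ^ p.1 / (p.1.factorial : ℝ)) := by
    simpa using h
  have := (Equiv.summable_iff (Nat.divModEquiv N)).mpr h'
  exact this


lemma aux_fact (N : ℕ) (hN : 1 ≤ N) (μ : Fin N → ℕ) :
    ((∑ i, μ i) / N).factorial ≤ ∏ i, (μ i).factorial := by
  have hne : (Finset.univ : Finset (Fin N)).Nonempty := ⟨⟨0, hN⟩, Finset.mem_univ _⟩
  obtain ⟨j, -, hj⟩ := Finset.exists_max_image Finset.univ μ hne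
  have hsum : ∑ i, μ i ≤ N * μ j := by
    calc ∑ i, μ i ≤ ∑ _i : Fin N, μ j := Finset.sum_le_sum fun i _ => hj i (Finset.mem_univ _)
    _ = N * μ j := by simp [Finset.sum_const, mul_comm]
  have hdiv : (∑ i, μ i) / N ≤ μ j := by
    calc (∑ i, μ i) / N ≤ (N * μ j) / N := Nat.div_le_div_right hsum
    _ = μ j := Nat.mul_div_cancel_left _ (by omega)
  calc ((∑ i, μ i) / N).factorial ≤ (μ j).factorial := Nat.factorial_le hdiv
  _ ≤ ∏ i, (μ i).factorial :=
      Finset.single_le_prod' (fun i _ => Nat.one_le_iff_ne_zero.mpr (μ i).factorial_ne_zero)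
        (Finset.mem_univ j)


lemma aux_summable_g (N : ℕ) (hN : 1 ≤ N) (M : ℝ) (hM : 0 ≤ M) :
    Summable (fun s : ℕ => ((N + s : ℕ) : ℝ) ^ N * M ^ (2 * s) / ((s / N).factorial : ℝ)) := by
  set B : ℝ := 2 ^ N * M ^ 2 with hB
  set E : ℝ := max 1 B with hE
  have hE1 : (1:ℝ) ≤ E := le_max_left _ _
  have hE0 : (0:ℝ) ≤ E := by linarith
  have hEN : (0:ℝ) ≤ E ^ N := by positivity
  have hsum := (aux_summable_div N hN (E ^ N) hEN).mul_left ((2:ℝ) ^ (N*N) * E ^ N)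
  refine Summable.of_nonneg_of_le (fun s => by positivity) (fun s => ?_) hsum
  have key : ((N + s : ℕ) : ℝ) ^ N * M ^ (2 * s) ≤ 2 ^ (N*N) * E ^ N * (E ^ N) ^ (s / N) := by
    have h1 : ((N + s : ℕ) : ℝ) ≤ 2 ^ (N + s) := by
      have := Nat.lt_two_pow_self (n := N + s)
      calc ((N + s : ℕ) : ℝ) ≤ ((2 ^ (N + s) : ℕ) : ℝ) := by exact_mod_cast this.le
      _ = 2 ^ (N + s) := by push_cast; ring
    have h2 : ((N + s : ℕ) : ℝ) ^ N * M ^ (2 * s) ≤ 2 ^ (N*N) * B ^ s := by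
      calc ((N + s : ℕ) : ℝ) ^ N * M ^ (2 * s)
          ≤ ((2:ℝ) ^ (N + s)) ^ N * M ^ (2 * s) := by
            apply mul_le_mul_of_nonneg_right (pow_le_pow_left₀ (by positivity) h1 N) (by positivity)
      _ = 2 ^ (N*N) * B ^ s := by
            have e1 : ((2:ℝ) ^ (N + s)) ^ N = 2 ^ (N*N) * 2 ^ (N*s) := by
              rw [← pow_mul, ← pow_add]; congr 1; ring
            have e2 : B ^ s = 2 ^ (N*s) * M ^ (2*s) := by
              rw [hB, mul_pow, ← pow_mul, ← pow_mul]
            rw [e1, e2]; ring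
    have h3 : B ^ s ≤ E ^ N * (E ^ N) ^ (s / N) := by
      have hBE : B ≤ E := le_max_right _ _
      have hB0 : 0 ≤ B := by positivity
      calc B ^ s ≤ E ^ s := pow_le_pow_left₀ hB0 hBE s
      _ ≤ E ^ (N * (s / N) + N) := by
          apply pow_le_pow_right₀ hE1
          have := Nat.div_add_mod s N
          have := Nat.mod_lt s (show 0 < N by omega)
          omega
      _ = E ^ N * (E ^ N) ^ (s / N) := by rw [pow_add, pow_mul, mul_comm]
    calc ((N + s : ℕ) : ℝ) ^ N * M ^ (2 * s) ≤ 2 ^ (N*N) * B ^ s := h2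
    _ ≤ 2 ^ (N*N) * (E ^ N * (E ^ N) ^ (s / N)) := by
        apply mul_le_mul_of_nonneg_left h3 (by positivity)
    _ = 2 ^ (N*N) * E ^ N * (E ^ N) ^ (s / N) := by ring
  have hfpos : (0:ℝ) < ((s / N).factorial : ℝ) := by exact_mod_cast (s / N).factorial_pos
  have e3 : 2 ^ (N*N) * E ^ N * ((E ^ N) ^ (s / N) / ((s / N).factorial : ℝ))
      = (2 ^ (N*N) * E ^ N * (E ^ N) ^ (s / N)) / ((s / N).factorial : ℝ) := by ring
  rw [e3]
  gcongr


/-- If `|a_μ| ≤ C M^{|μ|}` for every multi-index `μ ∈ ℕ^N`, then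
`Σ_μ a_μ²/μ! ≤ C² Σ_{s=0}^∞ (N+s)^N M^{2s}/⌊s/N⌋!`; in particular the left-hand sum is
finite. -/
theorem weighted_coeff_sum_bound (N : ℕ) (hN : 1 ≤ N) (C M : ℝ) (hC : 0 ≤ C) (hM : 0 ≤ M)
    (a : (Fin N → ℕ) → ℝ) (ha : ∀ μ : Fin N → ℕ, |a μ| ≤ C * M ^ (∑ i, μ i)) :
    Summable (fun μ : Fin N → ℕ => (a μ) ^ 2 / ∏ i, ((μ i).factorial : ℝ)) ∧
    (∑' μ : Fin N → ℕ, (a μ) ^ 2 / ∏ i, ((μ i).factorial : ℝ)) ≤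
      C ^ 2 * ∑' s : ℕ, ((N + s : ℕ) : ℝ) ^ N * M ^ (2 * s) / ((s / N).factorial : ℝ) := by
  classical
  have hP : ∀ μ : Fin N → ℕ, (0:ℝ) < ∏ i, ((μ i).factorial : ℝ) := fun μ =>
    Finset.prod_pos (fun i _ => by exact_mod_cast (μ i).factorial_pos)
  have hf0 : ∀ μ : Fin N → ℕ, 0 ≤ (a μ) ^ 2 / ∏ i, ((μ i).factorial : ℝ) := fun μ =>
    div_nonneg (sq_nonneg _) (hP μ).le
  have ha2 : ∀ μ : Fin N → ℕ, (a μ)^2 ≤ C^2 * M ^ (2 * ∑ i, μ i) := by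
    intro μ
    calc (a μ)^2 = |a μ|^2 := (sq_abs _).symm
    _ ≤ (C * M ^ (∑ i, μ i))^2 := pow_le_pow_left₀ (abs_nonneg _) (ha μ) 2
    _ = C^2 * M ^ (2 * ∑ i, μ i) := by rw [mul_pow, ← pow_mul, mul_comm (∑ i, μ i) 2]
  -- summability of the left-hand side
  have hv : Summable (fun q : ℕ => (M^2)^q / (q.factorial : ℝ)) :=
    Real.summable_pow_div_factorial _
  have hv0 : ∀ q : ℕ, 0 ≤ (M^2)^q / (q.factorial:ℝ) := fun q => by positivity
  have hprod := aux_summable_pi_prod _ hv hv0 N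
  have hkey : ∀ μ : Fin N → ℕ, (a μ) ^ 2 / ∏ i, ((μ i).factorial : ℝ) ≤
      C^2 * ∏ i, ((M^2)^(μ i) / ((μ i).factorial : ℝ)) := by
    intro μ
    have hprodeq : ∏ i, ((M^2)^(μ i) / ((μ i).factorial : ℝ))
        = M ^ (2 * ∑ i, μ i) / ∏ i, ((μ i).factorial : ℝ) := by
      rw [Finset.prod_div_distrib, Finset.prod_pow_eq_pow_sum, ← pow_mul]
    rw [hprodeq, mul_div_assoc']
    gcongr
    · exact ha2 μ
  have hsumf : Summable (fun μ : Fin N → ℕ => (a μ) ^ 2 / ∏ i, ((μ i).factorial : ℝ)) :=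
    Summable.of_nonneg_of_le hf0 hkey (hprod.mul_left _)
  refine ⟨hsumf, ?_⟩
  have hg := aux_summable_g N hN M hM
  have hg0 : ∀ s : ℕ, 0 ≤ ((N + s : ℕ) : ℝ) ^ N * M ^ (2 * s) / ((s / N).factorial : ℝ) :=
    fun s => by positivity
  -- pointwise bound by a function of |μ| only
  set w : (Fin N → ℕ) → ℝ :=
    fun μ => C^2 * M^(2 * (∑ i, μ i)) / (((∑ i, μ i) / N).factorial : ℝ) with hw
  have hw0 : ∀ μ, 0 ≤ w μ := fun μ => by rw [hw]; positivity
  have hfw : ∀ μ : Fin N → ℕ, (a μ) ^ 2 / ∏ i, ((μ i).factorial : ℝ) ≤ w μ := by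
    intro μ
    rw [hw]
    have hfactle : (((∑ i, μ i) / N).factorial : ℝ) ≤ ∏ i, ((μ i).factorial : ℝ) := by
      rw [← Nat.cast_prod]
      exact_mod_cast aux_fact N hN μ
    have hfactpos : (0:ℝ) < (((∑ i, μ i) / N).factorial : ℝ) := by
      exact_mod_cast ((∑ i, μ i) / N).factorial_pos
    exact div_le_div₀ (by positivity) (ha2 μ) hfactpos hfactle
  -- pass to ENNReal
  set σ : (Fin N → ℕ) → ℕ := fun μ => ∑ i, μ i with hσ
  have step1 : ENNReal.ofReal (∑' μ : Fin N → ℕ, (a μ) ^ 2 / ∏ i, ((μ i).factorial : ℝ))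
      = ∑' μ : Fin N → ℕ, ENNReal.ofReal ((a μ) ^ 2 / ∏ i, ((μ i).factorial : ℝ)) :=
    ENNReal.ofReal_tsum_of_nonneg hf0 hsumf
  have step2 : ∑' μ : Fin N → ℕ, ENNReal.ofReal ((a μ) ^ 2 / ∏ i, ((μ i).factorial : ℝ))
      ≤ ∑' μ : Fin N → ℕ, ENNReal.ofReal (w μ) :=
    ENNReal.tsum_le_tsum (fun μ => ENNReal.ofReal_le_ofReal (hfw μ))
  have step3 : ∑' μ : Fin N → ℕ, ENNReal.ofReal (w μ)
      = ∑' s : ℕ, ∑' μ : {μ : Fin N → ℕ // σ μ = s}, ENNReal.ofReal (w μ.1) := by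
    calc ∑' μ : Fin N → ℕ, ENNReal.ofReal (w μ)
        = ∑' p : Σ s : ℕ, {μ : Fin N → ℕ // σ μ = s},
            ENNReal.ofReal (w (Equiv.sigmaFiberEquiv σ p)) :=
          ((Equiv.sigmaFiberEquiv σ).tsum_eq (fun μ => ENNReal.ofReal (w μ))).symm
    _ = ∑' s : ℕ, ∑' μ : {μ : Fin N → ℕ // σ μ = s},
            ENNReal.ofReal (w (Equiv.sigmaFiberEquiv σ ⟨s, μ⟩)) := ENNReal.tsum_sigma' _
    _ = ∑' s : ℕ, ∑' μ : {μ : Fin N → ℕ // σ μ = s}, ENNReal.ofReal (w μ.1) :=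
          tsum_congr fun s => tsum_congr fun μ => rfl
  have step4 : ∀ s : ℕ, ∑' μ : {μ : Fin N → ℕ // σ μ = s}, ENNReal.ofReal (w μ.1)
      ≤ (((s+1)^N : ℕ) : ENNReal) * ENNReal.ofReal (C^2 * M^(2*s) / ((s / N).factorial : ℝ)) := by
    intro s
    have hconst : ∀ μ : {μ : Fin N → ℕ // σ μ = s},
        ENNReal.ofReal (w μ.1) = ENNReal.ofReal (C^2 * M^(2*s) / ((s / N).factorial : ℝ)) := by
      intro μ
      obtain ⟨μ, rfl⟩ := μ
      simp [hw, hσ]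
    set c := ENNReal.ofReal (C^2 * M^(2*s) / ((s / N).factorial : ℝ)) with hc
    have hι : ∃ ι : {μ : Fin N → ℕ // σ μ = s} → (Fin N → Fin (s+1)), Function.Injective ι := by
      refine ⟨fun μ i => ⟨μ.1 i, ?_⟩, ?_⟩
      · have h2 : ∑ j, μ.1 j = s := μ.2
        have h3 : μ.1 i ≤ ∑ j, μ.1 j :=
          Finset.single_le_sum (fun j _ => Nat.zero_le _) (Finset.mem_univ i)
        omega
      · intro μ ν h
        ext i
        have := congrFun h i
        simpa using congrArg Fin.val this
    obtain ⟨ι, hι⟩ := hι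
    calc ∑' μ : {μ : Fin N → ℕ // σ μ = s}, ENNReal.ofReal (w μ.1)
        = ∑' μ : {μ : Fin N → ℕ // σ μ = s}, c := by
          exact tsum_congr hconst
    _ = ∑' μ : {μ : Fin N → ℕ // σ μ = s}, (fun _ : Fin N → Fin (s+1) => c) (ι μ) := rfl
    _ ≤ ∑' _ : Fin N → Fin (s+1), c := ENNReal.tsum_comp_le_tsum_of_injective hι _
    _ = (((s+1)^N : ℕ) : ENNReal) * c := by
          rw [tsum_fintype]
          simp [Finset.sum_const, Fintype.card_fun, nsmul_eq_mul]
  have step5 : ∀ s : ℕ, (((s+1)^N : ℕ) : ENNReal)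
        * ENNReal.ofReal (C^2 * M^(2*s) / ((s / N).factorial : ℝ))
      ≤ ENNReal.ofReal (C^2 * (((N + s : ℕ) : ℝ) ^ N * M ^ (2 * s) / ((s / N).factorial : ℝ))) := by
    intro s
    rw [← ENNReal.ofReal_natCast ((s+1)^N), ← ENNReal.ofReal_mul (by positivity)]
    apply ENNReal.ofReal_le_ofReal
    have h1 : (((s+1 : ℕ)):ℝ) ^ N ≤ (((N+s : ℕ)):ℝ)^N := by
      apply pow_le_pow_left₀ (by positivity)
      exact_mod_cast (by omega : s + 1 ≤ N + s)
    calc (((s+1)^N : ℕ) : ℝ) * (C^2 * M^(2*s) / ((s / N).factorial : ℝ))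
        = (((s+1 : ℕ)):ℝ)^N * (C^2 * M^(2*s) / ((s / N).factorial : ℝ)) := by push_cast; ring
    _ ≤ (((N+s : ℕ)):ℝ)^N * (C^2 * M^(2*s) / ((s / N).factorial : ℝ)) := by
        apply mul_le_mul_of_nonneg_right h1 (by positivity)
    _ = C^2 * (((N + s : ℕ) : ℝ) ^ N * M ^ (2 * s) / ((s / N).factorial : ℝ)) := by ring
  have hRHS0 : 0 ≤ C^2 * ∑' s : ℕ, ((N + s : ℕ) : ℝ) ^ N * M ^ (2 * s) / ((s / N).factorial : ℝ) :=
    mul_nonneg (sq_nonneg _) (tsum_nonneg hg0)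
  have chain : ENNReal.ofReal (∑' μ : Fin N → ℕ, (a μ) ^ 2 / ∏ i, ((μ i).factorial : ℝ))
      ≤ ENNReal.ofReal (C^2 * ∑' s : ℕ, ((N + s : ℕ) : ℝ) ^ N * M ^ (2 * s) / ((s / N).factorial : ℝ)) := by
    calc ENNReal.ofReal (∑' μ : Fin N → ℕ, (a μ) ^ 2 / ∏ i, ((μ i).factorial : ℝ))
        = ∑' μ : Fin N → ℕ, ENNReal.ofReal ((a μ) ^ 2 / ∏ i, ((μ i).factorial : ℝ)) := step1
    _ ≤ ∑' μ : Fin N → ℕ, ENNReal.ofReal (w μ) := step2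
    _ = ∑' s : ℕ, ∑' μ : {μ : Fin N → ℕ // σ μ = s}, ENNReal.ofReal (w μ.1) := step3
    _ ≤ ∑' s : ℕ, (((s+1)^N : ℕ) : ENNReal)
          * ENNReal.ofReal (C^2 * M^(2*s) / ((s / N).factorial : ℝ)) :=
        ENNReal.tsum_le_tsum step4
    _ ≤ ∑' s : ℕ, ENNReal.ofReal
          (C^2 * (((N + s : ℕ) : ℝ) ^ N * M ^ (2 * s) / ((s / N).factorial : ℝ))) :=
        ENNReal.tsum_le_tsum step5
    _ = ENNReal.ofReal (∑' s : ℕ,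
          C^2 * (((N + s : ℕ) : ℝ) ^ N * M ^ (2 * s) / ((s / N).factorial : ℝ))) :=
        (ENNReal.ofReal_tsum_of_nonneg (fun s => by positivity) (hg.mul_left _)).symm
    _ = ENNReal.ofReal (C^2 * ∑' s : ℕ,
          ((N + s : ℕ) : ℝ) ^ N * M ^ (2 * s) / ((s / N).factorial : ℝ)) := by
        rw [tsum_mul_left]
  exact (ENNReal.ofReal_le_ofReal_iff hRHS0).mp chain
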